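/- For each pair of vectors a = (a_1,...,a_r) of positive integers and b = (b_1,...,b_s) of positive integers with sum a_i = sum b_i, and m = max(max_i a_i, max_i b_i), there exist sets A_1,...,A_r ⊆ {1,...,m} and B_1,...,B_s ⊆ {1,...,m} with |A_i| = a_i, |B_i| = b_i, and for every j ∈ {1,...,m}, the number of indices i with j ∈ A_i equals the number of indices i with j ∈ B_i. -/
import Mathlib

lemma aux_inj {m p l : ℕ} (hl : l ≤ m) :
    ∀ k1 ∈ Finset.Ico p (p + l), ∀ k2 ∈ Finset.Ico p (p + l),
      k1 % m = k2 % m → k1 = k2 := by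
  intro k1 h1 k2 h2 h
  simp only [Finset.mem_Ico] at h1 h2
  rcases le_total k1 k2 with hle | hle
  · have hd : m ∣ k2 - k1 := (Nat.modEq_iff_dvd' hle).mp h
    have := Nat.eq_zero_of_dvd_of_lt hd
    omega
  · have hd : m ∣ k1 - k2 := (Nat.modEq_iff_dvd' hle).mp h.symm
    have := Nat.eq_zero_of_dvd_of_lt hd
    omega

lemma aux_card_le_one {m p l : ℕ} (hl : l ≤ m) (j : ℕ) :
    ((Finset.Ico p (p + l)).filter (fun k => k % m = j)).card ≤ 1 := by
  apply Finset.card_le_one.mpr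
  intro k1 h1 k2 h2
  simp only [Finset.mem_filter] at h1 h2
  exact aux_inj hl k1 h1.1 k2 h2.1 (h1.2.trans h2.2.symm)

lemma aux_partition (f : ℕ → ℕ) (pred : ℕ → Prop) [DecidablePred pred] (n : ℕ) :
    ((Finset.range (∑ t ∈ Finset.range n, f t)).filter pred).card
      = ∑ t ∈ Finset.range n,
          ((Finset.Ico (∑ k ∈ Finset.range t, f k)
              (∑ k ∈ Finset.range (t + 1), f k)).filter pred).card := by
  induction n with
  | zero => simp
  | succ n ih =>
    have hU : Finset.range (∑ t ∈ Finset.range (n + 1), f t)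
        = Finset.range (∑ t ∈ Finset.range n, f t)
          ∪ Finset.Ico (∑ t ∈ Finset.range n, f t) (∑ t ∈ Finset.range (n + 1), f t) := by
      ext x
      simp only [Finset.mem_range, Finset.mem_union, Finset.mem_Ico,
        Finset.sum_range_succ]
      omega
    rw [hU, Finset.filter_union, Finset.card_union_of_disjoint
      (Finset.disjoint_filter_filter (by
        rw [Finset.range_eq_Ico]; exact Finset.Ico_disjoint_Ico_consecutive _ _ _)),
      ih]
    simp [Finset.sum_range_succ]

lemma aux_side (m : ℕ) (hm : 0 < m) (r : ℕ) (a : Fin r → ℕ) (hle : ∀ i, a i ≤ m) :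
    ∃ A : Fin r → Finset (Fin m), (∀ i, (A i).card = a i) ∧
      ∀ j : Fin m, (Finset.univ.filter (fun i => j ∈ A i)).card =
        ((Finset.range (∑ i, a i)).filter (fun k => k % m = j.val)).card := by
  set a' : ℕ → ℕ := fun n => if h : n < r then a ⟨n, h⟩ else 0 with ha'
  set P : ℕ → ℕ := fun n => ∑ t ∈ Finset.range n, a' t with hP
  have ha'v : ∀ i : Fin r, a' i.val = a i := by
    intro i; simp [ha', i.isLt]
  refine ⟨fun i => (Finset.Ico (P i.val) (P (i.val + 1))).image
      (fun k => (⟨k % m, Nat.mod_lt k hm⟩ : Fin m)), ?_, ?_⟩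
  · intro i
    dsimp only
    have hIco : P (i.val + 1) = P i.val + a i := by
      simp [hP, Finset.sum_range_succ, ha'v]
    rw [hIco, Finset.card_image_of_injOn, Nat.card_Ico, Nat.add_sub_cancel_left]
    intro k1 h1 k2 h2 h
    have := aux_inj (hle i) k1 (by simpa using h1) k2 (by simpa using h2)
      (by simpa [Fin.ext_iff] using h)
    exact this
  · intro j
    have hNa : ∑ i, a i = ∑ t ∈ Finset.range r, a' t := by
      rw [← Fin.sum_univ_eq_sum_range]
      exact Finset.sum_congr rfl fun i _ => (ha'v i).symm
    rw [hNa, aux_partition a' (fun k => k % m = j.val) r, Finset.card_filter,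
      ← Fin.sum_univ_eq_sum_range
        (fun t => ((Finset.Ico (P t) (P (t + 1))).filter (fun k => k % m = j.val)).card)]
    apply Finset.sum_congr rfl
    intro i _
    have hIco : P (i.val + 1) = P i.val + a i := by
      simp [hP, Finset.sum_range_succ, ha'v]
    have hmem : (j ∈ (Finset.Ico (P i.val) (P (i.val + 1))).image
        (fun k => (⟨k % m, Nat.mod_lt k hm⟩ : Fin m)))
        ↔ ((Finset.Ico (P i.val) (P (i.val + 1))).filter
            (fun k => k % m = j.val)).Nonempty := by
      simp only [Finset.mem_image, Finset.filter_nonempty_iff, Fin.ext_iff]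
    by_cases hj : j ∈ (Finset.Ico (P i.val) (P (i.val + 1))).image
        (fun k => (⟨k % m, Nat.mod_lt k hm⟩ : Fin m))
    · rw [if_pos hj]
      have h1 := hmem.mp hj
      have h2 : ((Finset.Ico (P i.val) (P (i.val + 1))).filter
          (fun k => k % m = j.val)).card ≤ 1 := by
        rw [hIco]; exact aux_card_le_one (hle i) j.val
      have h3 := Finset.card_pos.mpr h1
      omega
    · rw [if_neg hj]
      have := hmem.not.mp hj
      rw [Finset.not_nonempty_iff_eq_empty] at this
      simp [this]

/-- Lemma (LVTOC): vectors of positive integers with equal sums can be realized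
as set systems over `{1,…,m}` with equal degrees, where `m` is the maximal entry. -/
theorem stmt0 (r s : ℕ) (a : Fin r → ℕ) (b : Fin s → ℕ)
    (ha : ∀ i, 0 < a i) (hb : ∀ i, 0 < b i)
    (hsum : ∑ i, a i = ∑ i, b i)
    (m : ℕ) (hm : m = max (Finset.univ.sup a) (Finset.univ.sup b)) :
    ∃ (A : Fin r → Finset (Fin m)) (B : Fin s → Finset (Fin m)),
      (∀ i, (A i).card = a i) ∧ (∀ i, (B i).card = b i) ∧
      ∀ j : Fin m,
        (Finset.univ.filter (fun i => j ∈ A i)).card =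
        (Finset.univ.filter (fun i => j ∈ B i)).card := by
  have hma : ∀ i, a i ≤ m := fun i => hm ▸
    le_trans (Finset.le_sup (Finset.mem_univ i)) (le_max_left _ _)
  have hmb : ∀ i, b i ≤ m := fun i => hm ▸
    le_trans (Finset.le_sup (Finset.mem_univ i)) (le_max_right _ _)
  rcases Nat.eq_zero_or_pos m with h0 | hmpos
  · have hra : ∀ i : Fin r, False := fun i => by have := hma i; have := ha i; omega
    have hrb : ∀ i : Fin s, False := fun i => by have := hmb i; have := hb i; omega
    exact ⟨fun i => (hra i).elim, fun i => (hrb i).elim,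
      fun i => (hra i).elim, fun i => (hrb i).elim,
      fun j => absurd j.isLt (by omega)⟩
  · obtain ⟨A, hA, hAd⟩ := aux_side m hmpos r a hma
    obtain ⟨B, hB, hBd⟩ := aux_side m hmpos s b hmb
    exact ⟨A, B, hA, hB, fun j => by rw [hAd j, hBd j, hsum]⟩
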